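/- Let S_1, S_2 be disjoint subsets of F_q^n and let m_1, m_2 be nonnegative integers and m a positive real number. If |S_1|*C(m_1+n-1, n) + |S_2|*C(m_2+n-1, n) < N_q(n,m), then there exists a nonzero polynomial g in F_q[x_1,...,x_n] of total degree less than mq and individual degree at most q-1 in each variable which vanishes with multiplicity at least m_1 at every point of S_1 and with multiplicity at least m_2 at every point of S_2. -/

import Mathlib

open scoped Classical

lemma aux_choose (n k : ℕ) (hn : 0 < n) :
    (n + k - 1).choose k = (k + (n - 1)).choose (n - 1) := by
  have h1 : k ≤ n + k - 1 := by omega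
  have h3 := Nat.choose_symm h1
  have h2 : n + k - 1 - k = n - 1 := by omega
  rw [h2] at h3
  rw [← h3]
  congr 1
  omega

lemma aux_fiber (n k : ℕ) (hn : 0 < n) (s : Finset (Fin n → ℕ))
    (hmem : ∀ d : Fin n → ℕ, d ∈ s ↔ ∑ i, d i = k) :
    s.card = (k + (n - 1)).choose (n - 1) := by
  haveI : Fintype {P : Fin n → ℕ // ∑ i, P i = k} :=
    Fintype.ofEquiv (Sym (Fin n) k) (Sym.equivNatSumOfFintype (Fin n) k)
  rw [(Fintype.card_of_subtype _ hmem).symm,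
    Fintype.card_congr (Sym.equivNatSumOfFintype (Fin n) k).symm,
    Sym.card_sym_eq_multichoose, Fintype.card_fin, Nat.multichoose_eq]
  exact aux_choose n k hn

lemma aux_sum (n M : ℕ) (hn : 0 < n) :
    ∑ k ∈ Finset.range M, (k + (n - 1)).choose (n - 1) ≤ (M + n - 1).choose n := by
  rcases M with _ | N
  · simp
  · rw [Nat.sum_range_add_choose N (n - 1)]
    have h : (n - 1) + 1 = n := by omega
    rw [h]
    apply Nat.le_of_eq
    congr 1
    omega

lemma aux_card (n M : ℕ) (hn : 0 < n) :
    ((Fintype.piFinset fun _ : Fin n => Finset.range M).filter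
      (fun d => ∑ j, d j < M)).card ≤ (M + n - 1).choose n := by
  classical
  set s := (Fintype.piFinset fun _ : Fin n => Finset.range M).filter
      (fun d => ∑ j, d j < M) with hs
  have hfibcard : ∀ k ∈ Finset.range M,
      (s.filter fun d => (∑ j, d j) = k).card = (k + (n - 1)).choose (n - 1) := by
    intro k hk
    rw [Finset.mem_range] at hk
    apply aux_fiber n k hn
    intro d
    simp only [hs, Finset.mem_filter, Fintype.mem_piFinset, Finset.mem_range]
    constructor
    · rintro ⟨⟨-, -⟩, h⟩; exact h
    · intro h
      have hdj : ∀ j, d j < M := by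
        intro j
        have h1 : d j ≤ ∑ i, d i :=
          Finset.single_le_sum (fun i _ => Nat.zero_le _) (Finset.mem_univ j)
        omega
      exact ⟨⟨hdj, by omega⟩, h⟩
  calc s.card = ∑ k ∈ Finset.range M, (s.filter fun d => (∑ j, d j) = k).card := by
        apply Finset.card_eq_sum_card_fiberwise
        intro d hd
        simp only [hs, Finset.mem_coe, Finset.mem_filter] at hd
        exact Finset.mem_coe.2 (Finset.mem_range.2 hd.2)
    _ = ∑ k ∈ Finset.range M, (k + (n - 1)).choose (n - 1) :=
        Finset.sum_congr rfl hfibcard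
    _ ≤ (M + n - 1).choose n := aux_sum n M hn

/-- Interpolation of a nonzero polynomial with prescribed (possibly different)
vanishing multiplicities on two disjoint sets. -/
theorem stmt_1 (F : Type) [Field F] [Fintype F] (n : ℕ) (hn : 0 < n)
    (q : ℕ) (hq : q = Fintype.card F)
    (S₁ S₂ : Finset (Fin n → F)) (hdisj : Disjoint S₁ S₂)
    (m₁ m₂ : ℕ) (m : ℝ) (hm : 0 < m)
    (hcard : ((S₁.card * Nat.choose (m₁ + n - 1) n
        + S₂.card * Nat.choose (m₂ + n - 1) n : ℕ) : ℝ)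
      < ((Finset.univ.filter (fun e : Fin n → Fin q =>
          (∑ j, ((e j : ℕ) : ℝ)) < m * q)).card : ℝ)) :
    ∃ g : MvPolynomial (Fin n) F, g ≠ 0 ∧
      ((g.totalDegree : ℝ) < m * q) ∧
      (∀ i, g.degreeOf i ≤ q - 1) ∧
      (∀ a ∈ S₁, ∀ d ∈ (MvPolynomial.bind₁
          (fun i => MvPolynomial.X i + MvPolynomial.C (a i)) g).support,
          m₁ ≤ d.sum fun _ k => k) ∧
      (∀ a ∈ S₂, ∀ d ∈ (MvPolynomial.bind₁
          (fun i => MvPolynomial.X i + MvPolynomial.C (a i)) g).support,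
          m₂ ≤ d.sum fun _ k => k) := by
  classical
  -- notation
  set E : Finset (Fin n → Fin q) := Finset.univ.filter (fun e : Fin n → Fin q =>
      (∑ j, ((e j : ℕ) : ℝ)) < m * q) with hE
  set D₁ : Finset (Fin n → ℕ) := (Fintype.piFinset fun _ : Fin n => Finset.range m₁).filter
      (fun d => ∑ j, d j < m₁) with hD₁
  set D₂ : Finset (Fin n → ℕ) := (Fintype.piFinset fun _ : Fin n => Finset.range m₂).filter
      (fun d => ∑ j, d j < m₂) with hD₂
  have hDmem : ∀ (M : ℕ) (d : Fin n → ℕ), (∑ j, d j) < M →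
      d ∈ (Fintype.piFinset fun _ : Fin n => Finset.range M).filter
        (fun d => ∑ j, d j < M) := by
    intro M d hd
    refine Finset.mem_filter.2 ⟨Fintype.mem_piFinset.2 fun j => Finset.mem_range.2 ?_, hd⟩
    have h1 : d j ≤ ∑ i, d i :=
      Finset.single_le_sum (fun i _ => Nat.zero_le _) (Finset.mem_univ j)
    exact lt_of_le_of_lt h1 hd
  -- the exponent cast
  set castExp : (Fin n → Fin q) → (Fin n →₀ ℕ) :=
    fun e => Finsupp.equivFunOnFinite.symm (fun j => (e j : ℕ)) with hcast
  have hcast_inj : Function.Injective castExp := by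
    intro e e' h
    have h' : (fun j => ((e j : ℕ))) = (fun j => ((e' j : ℕ))) :=
      Finsupp.equivFunOnFinite.symm.injective h
    funext j
    exact Fin.val_injective (congrFun h' j)
  -- the polynomial-building linear map
  set G : ({e : Fin n → Fin q // e ∈ E} → F) →ₗ[F] MvPolynomial (Fin n) F :=
    ∑ e ∈ E.attach, (MvPolynomial.monomial (castExp e.1)).comp
      (LinearMap.proj (R := F) (φ := fun _ : {e : Fin n → Fin q // e ∈ E} => F) e) with hG
  have hGapp : ∀ c : {e : Fin n → Fin q // e ∈ E} → F, G c = ∑ e ∈ E.attach,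
      MvPolynomial.monomial (castExp e.1) (c e) := by
    intro c
    rw [hG, LinearMap.sum_apply]
    rfl
  -- the coefficient extraction linear map
  set coeffL : (Fin n →₀ ℕ) → MvPolynomial (Fin n) F →ₗ[F] F := fun d =>
    { toFun := MvPolynomial.coeff d
      map_add' := fun p q => MvPolynomial.coeff_add d p q
      map_smul' := fun r p => MvPolynomial.coeff_smul d r p } with hcoeffL
  set L : ({e : Fin n → Fin q // e ∈ E} → F) →ₗ[F]
      (({x : (Fin n → F) × (Fin n → ℕ) // x ∈ S₁ ×ˢ D₁} → F)
      × ({x : (Fin n → F) × (Fin n → ℕ) // x ∈ S₂ ×ˢ D₂} → F)) := LinearMap.prod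
    (LinearMap.pi fun x => (coeffL (Finsupp.equivFunOnFinite.symm x.1.2)).comp
      (((MvPolynomial.bind₁ (fun i => MvPolynomial.X i
        + MvPolynomial.C (x.1.1 i))).toLinearMap).comp G))
    (LinearMap.pi fun x => (coeffL (Finsupp.equivFunOnFinite.symm x.1.2)).comp
      (((MvPolynomial.bind₁ (fun i => MvPolynomial.X i
        + MvPolynomial.C (x.1.1 i))).toLinearMap).comp G)) with hL
  -- dimension count
  have hrV : Module.finrank F ({e : Fin n → Fin q // e ∈ E} → F) = E.card := by
    rw [Module.finrank_pi, Fintype.card_coe]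
  have hrW : Module.finrank F (({x : (Fin n → F) × (Fin n → ℕ) // x ∈ S₁ ×ˢ D₁} → F)
      × ({x : (Fin n → F) × (Fin n → ℕ) // x ∈ S₂ ×ˢ D₂} → F))
      = (S₁ ×ˢ D₁).card + (S₂ ×ˢ D₂).card := by
    rw [Module.finrank_prod, Module.finrank_pi, Module.finrank_pi,
      Fintype.card_coe, Fintype.card_coe]
  have hcardN : S₁.card * Nat.choose (m₁ + n - 1) n
      + S₂.card * Nat.choose (m₂ + n - 1) n < E.card := by
    exact_mod_cast hcard
  have hWV : Module.finrank F (({x : (Fin n → F) × (Fin n → ℕ) // x ∈ S₁ ×ˢ D₁} → F)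
      × ({x : (Fin n → F) × (Fin n → ℕ) // x ∈ S₂ ×ˢ D₂} → F))
      < Module.finrank F ({e : Fin n → Fin q // e ∈ E} → F) := by
    rw [hrV, hrW, Finset.card_product, Finset.card_product]
    refine lt_of_le_of_lt ?_ hcardN
    have h1 := aux_card n m₁ hn
    have h2 := aux_card n m₂ hn
    rw [← hD₁] at h1
    rw [← hD₂] at h2
    exact Nat.add_le_add (Nat.mul_le_mul_left _ h1) (Nat.mul_le_mul_left _ h2)
  -- a nonzero kernel element
  have hninj : ¬ Function.Injective L := by
    intro hinj
    exact (not_lt.2 (LinearMap.finrank_le_finrank_of_injective hinj)) hWV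
  rw [Function.not_injective_iff] at hninj
  obtain ⟨x, y, hxy, hne⟩ := hninj
  set c : {e : Fin n → Fin q // e ∈ E} → F := x - y with hc
  have hc0 : c ≠ 0 := sub_ne_zero.2 hne
  have hLc : L c = 0 := by rw [hc, map_sub, hxy, sub_self]
  -- coefficients of G c
  have hcoeff : ∀ e : {e : Fin n → Fin q // e ∈ E},
      MvPolynomial.coeff (castExp e.1) (G c) = c e := by
    intro e₀
    rw [hGapp, MvPolynomial.coeff_sum]
    rw [Finset.sum_eq_single e₀]
    · rw [MvPolynomial.coeff_monomial, if_pos rfl]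
    · intro e _ hne
      rw [MvPolynomial.coeff_monomial, if_neg]
      intro h
      exact hne (Subtype.ext (hcast_inj h))
    · intro h
      exact absurd (Finset.mem_attach _ e₀) h
  -- support description
  have hsupp : ∀ d ∈ (G c).support, ∃ e : Fin n → Fin q, e ∈ E ∧ d = castExp e := by
    intro d hd
    rw [hGapp] at hd
    have := MvPolynomial.support_sum hd
    rw [Finset.mem_biUnion] at this
    obtain ⟨e, -, hde⟩ := this
    have := MvPolynomial.support_monomial_subset hde
    rw [Finset.mem_singleton] at this
    exact ⟨e.1, e.2, this⟩
  -- nonzero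
  have hg0 : G c ≠ 0 := by
    obtain ⟨e₀, he₀⟩ := Function.ne_iff.1 hc0
    intro h
    apply he₀
    have := hcoeff e₀
    rw [h, MvPolynomial.coeff_zero] at this
    exact this.symm
  -- the coordinates of castExp
  have hcastApp : ∀ (e : Fin n → Fin q) (j : Fin n), (castExp e) j = (e j : ℕ) := by
    intro e j; rfl
  have hcastSum : ∀ e : Fin n → Fin q,
      ((castExp e).sum fun _ k => k) = ∑ j, ((e j : ℕ)) := by
    intro e
    rw [Finsupp.sum_fintype]
    · exact Finset.sum_congr rfl fun j _ => hcastApp e j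
    · intro _; rfl
  -- the kernel conditions
  have hkernel : ∀ (a : Fin n → F) (dd : Fin n → ℕ),
      ((a, dd) ∈ S₁ ×ˢ D₁ ∨ (a, dd) ∈ S₂ ×ˢ D₂) →
      MvPolynomial.coeff (Finsupp.equivFunOnFinite.symm dd)
        ((MvPolynomial.bind₁
          (fun i => MvPolynomial.X i + MvPolynomial.C (a i))) (G c)) = 0 := by
    intro a dd hmem
    rcases hmem with hmem | hmem
    · have := congrFun (congrArg Prod.fst hLc) ⟨(a, dd), hmem⟩
      exact this
    · have := congrFun (congrArg Prod.snd hLc) ⟨(a, dd), hmem⟩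
      exact this
  refine ⟨G c, hg0, ?_, ?_, ?_, ?_⟩
  · -- total degree
    have hne : (G c).support.Nonempty :=
      Finset.nonempty_iff_ne_empty.2 (fun h => hg0 (MvPolynomial.support_eq_empty.1 h))
    obtain ⟨d, hd, hdeq⟩ := Finset.exists_mem_eq_sup _ hne
      (fun d : Fin n →₀ ℕ => d.sum fun _ k => k)
    obtain ⟨e, heE, rfl⟩ := hsupp d hd
    have h1 : (G c).totalDegree = (castExp e).sum fun _ k => k := hdeq
    rw [h1, hcastSum e]
    have h2 : (∑ j, ((e j : ℕ) : ℝ)) < m * q := (Finset.mem_filter.1 heE).2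
    calc ((∑ j, (e j : ℕ) : ℕ) : ℝ) = ∑ j, ((e j : ℕ) : ℝ) := by push_cast; ring
      _ < m * q := h2
  · -- individual degrees
    intro i
    rw [MvPolynomial.degreeOf_le_iff]
    intro d hd
    obtain ⟨e, heE, rfl⟩ := hsupp d hd
    rw [hcastApp]
    exact Nat.le_sub_one_of_lt (e i).2
  · -- multiplicities on S₁
    intro a ha d hd
    by_contra hlt
    push_neg at hlt
    have hdd : (fun j => d j) ∈ D₁ := by
      apply hDmem
      calc ∑ j, d j = d.sum fun _ k => k := by
            rw [Finsupp.sum_fintype]; intro _; rfl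
        _ < m₁ := hlt
    have := hkernel a (fun j => d j) (Or.inl (Finset.mem_product.2 ⟨ha, hdd⟩))
    rw [Finsupp.equivFunOnFinite_symm_coe] at this
    exact MvPolynomial.mem_support_iff.1 hd this
  · -- multiplicities on S₂
    intro a ha d hd
    by_contra hlt
    push_neg at hlt
    have hdd : (fun j => d j) ∈ D₂ := by
      apply hDmem
      calc ∑ j, d j = d.sum fun _ k => k := by
            rw [Finsupp.sum_fintype]; intro _; rfl
        _ < m₂ := hlt
    have := hkernel a (fun j => d j) (Or.inr (Finset.mem_product.2 ⟨ha, hdd⟩))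
    rw [Finsupp.equivFunOnFinite_symm_coe] at this
    exact MvPolynomial.mem_support_iff.1 hd this
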